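/- For every positive integer n, T_n = (n/2) · Σ_{k=0}^{⌊n/2⌋} ((−1)^k · 2^{n−2k} / (n−k)) · C(n−k, k) · X^{n−2k}, where C denotes the binomial coefficient. -/

import Mathlib

open Polynomial Polynomial.Chebyshev Finset

noncomputable def chebB (n k : ℕ) : ℚ :=
  ((n : ℚ) / 2) * ((-1 : ℚ) ^ k * 2 ^ (n - 2 * k) / ((n : ℚ) - k) * (Nat.choose (n - k) k))

noncomputable def chebTerm (n k : ℕ) : ℚ[X] :=
  Polynomial.C (chebB n k) * Polynomial.X ^ (n - 2 * k)

noncomputable def chebRhs (n : ℕ) : ℚ[X] := ∑ k ∈ Finset.range (n / 2 + 1), chebTerm n k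

lemma cheb_nat_id (n k : ℕ) (hk : 1 ≤ k) (hkn : 2 * k ≤ n + 2) :
    (n + 2) * (n + 1 - k) * Nat.choose (n + 2 - k) k =
      (n + 2 - k) * ((n + 1) * Nat.choose (n + 1 - k) k + n * Nat.choose (n + 1 - k) (k - 1)) := by
  have pascal : Nat.choose (n + 2 - k) k
      = Nat.choose (n + 1 - k) (k - 1) + Nat.choose (n + 1 - k) k := by
    have h1 : n + 2 - k = (n + 1 - k) + 1 := by omega
    have h2 : k = (k - 1) + 1 := by omega
    rw [h1, h2, Nat.choose_succ_succ, Nat.succ_eq_add_one, ← h2]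
  have hsr := Nat.choose_succ_right_eq (n + 1 - k) (k - 1)
  rw [show (k - 1) + 1 = k by omega] at hsr
  rw [pascal]
  zify [show k ≤ n + 1 by omega, show k ≤ n + 2 by omega] at *
  have hc : ((k - 1 : ℕ) : ℤ) = (k : ℤ) - 1 := by omega
  zify [show k - 1 ≤ n + 1 - k by omega] at hsr
  rw [hc, show ((n + 1 - k : ℕ) : ℤ) = (n : ℤ) + 1 - k by omega] at hsr
  linear_combination (-1 : ℤ) * hsr

lemma chebB_id (n k : ℕ) (hk : 1 ≤ k) (h : 2 * k ≤ n + 1) :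
    chebB (n + 2) k = 2 * chebB (n + 1) k - chebB n (k - 1) := by
  have key := cheb_nat_id n k hk (by omega)
  have keyQ := congrArg (Nat.cast : ℕ → ℚ) key
  rw [Nat.cast_mul, Nat.cast_mul, Nat.cast_mul,
    Nat.cast_sub (show k ≤ n + 1 by omega), Nat.cast_sub (show k ≤ n + 2 by omega)] at keyQ
  push_cast at keyQ
  unfold chebB
  rw [show n + 2 - 2 * k = (n + 1 - 2 * k) + 1 by omega,
    show n - 2 * (k - 1) = (n + 1 - 2 * k) + 1 by omega,
    show n - (k - 1) = n + 1 - k by omega,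
    show ((k - 1 : ℕ) : ℚ) = (k : ℚ) - 1 by
      rw [Nat.cast_sub (show 1 ≤ k from hk)]; norm_num,
    show ((-1 : ℚ)) ^ (k - 1) = -(-1 : ℚ) ^ k by
      conv_rhs => rw [show k = (k - 1) + 1 by omega, pow_succ]
      ring]
  push_cast
  have hkn : (k : ℚ) < (n : ℚ) + 1 := by exact_mod_cast (show k < n + 1 by omega)
  have d2 : (n : ℚ) + 1 - k ≠ 0 := by intro hh; linarith [sub_eq_zero.mp hh]
  have d1 : (n : ℚ) + 2 - k ≠ 0 := by intro hh; linarith [sub_eq_zero.mp hh]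
  rw [pow_succ, show (n : ℚ) - ((k : ℚ) - 1) = (n : ℚ) + 1 - k by ring]
  field_simp
  linear_combination keyQ

lemma chebTerm_head (n : ℕ) :
    chebTerm (n + 2) 0 = 2 * Polynomial.X * chebTerm (n + 1) 0 := by
  have hb : ∀ m : ℕ, chebB (m + 1) 0 = 2 ^ (m + 1) / 2 := by
    intro m
    unfold chebB
    push_cast
    have : (m : ℚ) + 1 ≠ 0 := by positivity
    field_simp
    simp only [Nat.choose_zero_right, Nat.cast_one]
    ring
  unfold chebTerm
  rw [show n + 2 = (n + 1) + 1 from rfl, hb (n + 1), hb n]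
  simp only [Nat.sub_zero, Nat.mul_zero]
  rw [pow_succ (2 : ℚ) (n + 1), pow_succ Polynomial.X (n + 1)]
  rw [show (2 : ℚ) ^ (n + 1) * 2 / 2 = 2 * (2 ^ (n + 1) / 2) by ring, Polynomial.C_mul,
    map_ofNat Polynomial.C 2]
  ring

lemma chebTerm_step (n j : ℕ) (hn : 1 ≤ n) (hj : j ≤ n / 2) :
    chebTerm (n + 2) (j + 1) =
      2 * Polynomial.X * chebTerm (n + 1) (j + 1) - chebTerm n j := by
  by_cases h : 2 * (j + 1) ≤ n + 1
  · have hb := chebB_id n (j + 1) (by omega) h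
    simp only [Nat.add_sub_cancel] at hb
    unfold chebTerm
    rw [show n + 2 - 2 * (j + 1) = (n + 1 - 2 * (j + 1)) + 1 by omega,
      show n - 2 * j = (n + 1 - 2 * (j + 1)) + 1 by omega, hb]
    rw [Polynomial.C_sub, Polynomial.C_mul, pow_succ, map_ofNat Polynomial.C 2]
    ring
  · -- boundary: n = 2*(j+1) - 2 = 2*j, n even
    have hn2 : n = 2 * j := by omega
    subst hn2
    have hj1 : 1 ≤ j := by omega
    have hmid : chebTerm (2 * j + 1) (j + 1) = 0 := by
      unfold chebTerm chebB
      rw [show 2 * j + 1 - (j + 1) = j by omega]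
      rw [Nat.choose_succ_self]
      simp
    rw [hmid]
    unfold chebTerm chebB
    rw [show 2 * j + 2 - 2 * (j + 1) = 0 by omega, show 2 * j - 2 * j = 0 by omega,
      show 2 * j + 2 - (j + 1) = j + 1 by omega, show 2 * j - j = j by omega,
      Nat.choose_self, Nat.choose_self]
    push_cast
    have h1 : (j : ℚ) + 1 ≠ 0 := by positivity
    have h2 : (j : ℚ) ≠ 0 := by
      simpa using (Nat.cast_pos (α := ℚ)).mpr (show 0 < j by omega) |>.ne'
    rw [pow_succ]
    simp only [pow_zero, mul_one, mul_zero, zero_sub]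
    rw [← Polynomial.C_neg]
    congr 1
    rw [show (2 * (j:ℚ) + 2 - ((j:ℚ) + 1)) = (j:ℚ) + 1 by ring,
      show (2 * (j:ℚ) - (j:ℚ)) = (j:ℚ) by ring]
    field_simp

lemma chebRhs_step (n : ℕ) (hn : 1 ≤ n) :
    chebRhs (n + 2) = 2 * Polynomial.X * chebRhs (n + 1) - chebRhs n := by
  have hext : 2 * Polynomial.X * chebRhs (n + 1)
      = ∑ k ∈ Finset.range (n / 2 + 2), 2 * Polynomial.X * chebTerm (n + 1) k := by
    rw [chebRhs, Finset.mul_sum]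
    rcases Nat.even_or_odd n with ⟨m, hm⟩ | ⟨m, hm⟩
    · have h1 : (n + 1) / 2 + 1 = m + 1 := by omega
      have h2 : n / 2 + 2 = (m + 1) + 1 := by omega
      have hz : chebTerm (n + 1) (m + 1) = 0 := by
        unfold chebTerm chebB
        rw [show n + 1 - (m + 1) = m by omega, Nat.choose_succ_self]
        simp
      rw [h1, h2,
        Finset.sum_range_succ (fun k => 2 * Polynomial.X * chebTerm (n + 1) k) (m + 1), hz]
      ring
    · rw [show (n + 1) / 2 + 1 = n / 2 + 2 by omega]
  rw [hext, chebRhs, chebRhs, show (n + 2) / 2 + 1 = (n / 2 + 1) + 1 by omega,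
    Finset.sum_range_succ' (fun k => chebTerm (n + 2) k),
    Finset.sum_range_succ' (fun k => 2 * Polynomial.X * chebTerm (n + 1) k)]
  have hterm : ∀ j ∈ Finset.range (n / 2 + 1),
      chebTerm (n + 2) (j + 1) = 2 * Polynomial.X * chebTerm (n + 1) (j + 1) - chebTerm n j :=
    fun j hj => chebTerm_step n j hn (by have := Finset.mem_range.mp hj; omega)
  rw [Finset.sum_congr rfl hterm, Finset.sum_sub_distrib, chebTerm_head]
  abel

lemma chebT_eq (n : ℕ) : T ℚ ((n : ℤ) + 1) = chebRhs (n + 1) := by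
  induction n using Nat.strong_induction_on with
  | _ n ih =>
    match n with
    | 0 =>
      simp only [chebRhs, chebTerm, chebB]
      norm_num [T_one]
      rw [← Polynomial.C_mul]
      norm_num
    | 1 =>
      have : ((1 : ℕ) : ℤ) + 1 = 2 := by norm_num
      rw [this, T_two]
      simp only [chebRhs, chebTerm, chebB]
      rw [show 2 / 2 + 1 = 2 from rfl, Finset.sum_range_succ, Finset.sum_range_succ,
        Finset.sum_range_zero]
      norm_num
      rw [show (Polynomial.C (2:ℚ)) = 2 from map_ofNat Polynomial.C 2]
      ring
    | (m + 2) =>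
      have h1 := ih m (by omega)
      have h2 := ih (m + 1) (by omega)
      have hT := T_add_two ℚ (((m : ℕ) : ℤ) + 1)
      rw [show (((m + 2 : ℕ) : ℤ) + 1) = (((m : ℕ) : ℤ) + 1) + 2 by push_cast; ring, hT,
        show (((m : ℕ) : ℤ) + 1 + 1) = (((m + 1 : ℕ) : ℤ) + 1) by push_cast; ring,
        h1, h2, show m + 2 + 1 = (m + 1) + 2 from rfl, chebRhs_step (m + 1) (by omega)]

theorem chebyshev_T_explicit (n : ℕ) (hn : 0 < n) :
    T ℚ n = C ((n : ℚ) / 2) *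
      ∑ k ∈ Finset.range (n / 2 + 1),
        C ((-1 : ℚ) ^ k * 2 ^ (n - 2 * k) / (n - k) * (Nat.choose (n - k) k)) *
          X ^ (n - 2 * k) := by
  obtain ⟨m, rfl⟩ : ∃ m, n = m + 1 := ⟨n - 1, by omega⟩
  have h := chebT_eq m
  rw [show ((m + 1 : ℕ) : ℤ) = (m : ℤ) + 1 by push_cast; ring, h, chebRhs, Finset.mul_sum]
  exact Finset.sum_congr rfl fun k _ => by
    rw [chebTerm, chebB, Polynomial.C_mul, mul_assoc]
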